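/- With G a finite rooted tree and c(ρ) = ∏_{v∈V} (1 − ∑_{v'∈A(v)} ρ_{v'}) / (1 − ∑_{v'∈Ā(v)} ρ_{v'}) defined on the open region where ∑_{v'∈Ā(v)} ρ_{v'} < 1 for all v, one has for each vertex v: ρ_v · ∂(ln c(ρ))/∂ρ_v = ρ_v · ∑_{v'∈D̄(v)} (1 − d(v')) / (1 − ∑_{v''∈Ā(v')} ρ_{v''}), where d(v') is the number of children of v'. -/

import Mathlib

open Finset

def ancestors {n : ℕ} [NeZero n] (par : Fin n → Fin n) (hpar : ∀ v, v ≠ 0 → par v < v) :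
    Fin n → Finset (Fin n) :=
  fun v =>
    if h : v = 0 then ∅ else insert (par v) (ancestors par hpar (par v))
termination_by v => (v : ℕ)
decreasing_by exact hpar _ h

/-- `v` together with its strict ancestors. -/
def barA {n : ℕ} [NeZero n] (par : Fin n → Fin n) (hpar : ∀ v, v ≠ 0 → par v < v)
    (v : Fin n) : Finset (Fin n) :=
  insert v (ancestors par hpar v)

/-- `v` together with its descendants. -/
def barD {n : ℕ} [NeZero n] (par : Fin n → Fin n) (hpar : ∀ v, v ≠ 0 → par v < v)
    (v : Fin n) : Finset (Fin n) :=
  Finset.univ.filter (fun w => v ∈ barA par hpar w)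

/-- strict descendants of `v`. -/
def strictD {n : ℕ} [NeZero n] (par : Fin n → Fin n) (hpar : ∀ v, v ≠ 0 → par v < v)
    (v : Fin n) : Finset (Fin n) :=
  Finset.univ.filter (fun w => v ∈ ancestors par hpar w)

/-- children of `v`. -/
def children {n : ℕ} [NeZero n] (par : Fin n → Fin n) (v : Fin n) : Finset (Fin n) :=
  Finset.univ.filter (fun w => w ≠ 0 ∧ par w = v)

/-- Mean queue lengths under PF via differentiation of the log of the normalization
constant: if `d` is the derivative of `t ↦ ln c(ρ[v := t])` at `t = ρ_v`, then
`ρ_v · d = ρ_v · ∑_{v' ∈ D̄(v)} (1 - d(v')) / (1 - ∑_{v'' ∈ Ā(v')} ρ_{v''})`, where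
`c(ρ) = ∏_v (1 - ∑_{A(v)} ρ)/(1 - ∑_{Ā(v)} ρ)` and `d(v')` is the number of children
of `v'`. -/
lemma ancestors_zero {n : ℕ} [NeZero n] (par : Fin n → Fin n)
    (hpar : ∀ v, v ≠ 0 → par v < v) : ancestors par hpar 0 = ∅ := by
  rw [ancestors]; simp

lemma ancestors_ne_zero {n : ℕ} [NeZero n] (par : Fin n → Fin n)
    (hpar : ∀ v, v ≠ 0 → par v < v) (w : Fin n) (hw : w ≠ 0) :
    ancestors par hpar w = barA par hpar (par w) := by
  rw [ancestors]; simp [hw, barA]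

lemma mem_ancestors_iff {n : ℕ} [NeZero n] (par : Fin n → Fin n)
    (hpar : ∀ v, v ≠ 0 → par v < v) (v w : Fin n) :
    v ∈ ancestors par hpar w ↔ w ≠ 0 ∧ v ∈ barA par hpar (par w) := by
  by_cases hw : w = 0
  · simp [hw, ancestors_zero]
  · simp [ancestors_ne_zero par hpar w hw, hw]

theorem pf_mean_customers_deriv {n : ℕ} [NeZero n] (par : Fin n → Fin n)
    (hpar : ∀ v, v ≠ 0 → par v < v) (ρ : Fin n → ℝ) (hρ : ∀ v, 0 ≤ ρ v)
    (hload : ∀ v, ∑ v' ∈ barA par hpar v, ρ v' < 1) (v : Fin n) (d : ℝ)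
    (hd : HasDerivAt
      (fun t : ℝ => Real.log (∏ w,
        (1 - ∑ v' ∈ ancestors par hpar w, Function.update ρ v t v') /
        (1 - ∑ v' ∈ barA par hpar w, Function.update ρ v t v')))
      d (ρ v)) :
    ρ v * d =
      ρ v * ∑ v' ∈ barD par hpar v,
        (1 - ((children par v').card : ℝ)) / (1 - ∑ v'' ∈ barA par hpar v', ρ v'') := by
  classical
  set S : Fin n → ℝ := fun w => ∑ v' ∈ barA par hpar w, ρ v' with hS
  set A : Fin n → ℝ := fun w => ∑ v' ∈ ancestors par hpar w, ρ v' with hA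
  have hSpos : ∀ w, 0 < 1 - S w := fun w => by have := hload w; simp only [hS]; linarith
  have hApos : ∀ w, 0 < 1 - A w := by
    intro w
    have h1 : A w ≤ S w := Finset.sum_le_sum_of_subset_of_nonneg
      (Finset.subset_insert _ _) (fun i _ _ => hρ i)
    linarith [hSpos w]
  -- derivatives of the inner sums
  have hupd : ∀ (s : Finset (Fin n)),
      HasDerivAt (fun t => ∑ v' ∈ s, Function.update ρ v t v')
        (if v ∈ s then (1:ℝ) else 0) (ρ v) := by
    intro s
    have h := HasDerivAt.fun_sum (u := s)
      (A := fun v' (t : ℝ) => Function.update ρ v t v')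
      (A' := fun v' => if v' = v then (1:ℝ) else 0) (x := ρ v) ?_
    · rwa [Finset.sum_ite_eq' s v (fun _ => (1:ℝ))] at h
    · intro v' _
      simp only [Function.update_apply]
      by_cases h : v' = v
      · simpa [h] using (hasDerivAt_id' (x := ρ v))
      · simpa [h] using (hasDerivAt_const (ρ v) (ρ v'))
  have hAval : ∀ (s : Finset (Fin n)),
      (∑ v' ∈ s, Function.update ρ v (ρ v) v') = ∑ v' ∈ s, ρ v' := by
    intro s; simp [Function.update_eq_self]
  -- derivative of the sum-of-logs form
  set D : ℝ := ∑ w : Fin n,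
      ((if v ∈ barA par hpar w then (1:ℝ) else 0) / (1 - S w)
        - (if v ∈ ancestors par hpar w then (1:ℝ) else 0) / (1 - A w)) with hD
  have hsum : HasDerivAt (fun t : ℝ => ∑ w : Fin n,
      (Real.log (1 - ∑ v' ∈ ancestors par hpar w, Function.update ρ v t v')
        - Real.log (1 - ∑ v' ∈ barA par hpar w, Function.update ρ v t v'))) D (ρ v) := by
    rw [hD]
    apply HasDerivAt.fun_sum
    intro w _
    have h1 : HasDerivAt (fun t : ℝ => 1 - ∑ v' ∈ ancestors par hpar w, Function.update ρ v t v')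
        ((0:ℝ) - (if v ∈ ancestors par hpar w then (1:ℝ) else 0)) (ρ v) :=
      (hasDerivAt_const (ρ v) (1:ℝ)).sub (hupd _)
    have h2 : HasDerivAt (fun t : ℝ => 1 - ∑ v' ∈ barA par hpar w, Function.update ρ v t v')
        ((0:ℝ) - (if v ∈ barA par hpar w then (1:ℝ) else 0)) (ρ v) :=
      (hasDerivAt_const (ρ v) (1:ℝ)).sub (hupd _)
    have e1 : (1 - ∑ v' ∈ ancestors par hpar w, Function.update ρ v (ρ v) v') = 1 - A w := by
      rw [hAval]
    have e2 : (1 - ∑ v' ∈ barA par hpar w, Function.update ρ v (ρ v) v') = 1 - S w := by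
      rw [hAval]
    have hl1 := h1.log (by rw [e1]; exact ne_of_gt (hApos w))
    have hl2 := h2.log (by rw [e2]; exact ne_of_gt (hSpos w))
    have := hl1.fun_sub hl2
    rw [e1, e2] at this
    convert this using 1
    ring
  -- the two log forms agree near ρ v
  have hev : (fun t : ℝ => ∑ w : Fin n,
      (Real.log (1 - ∑ v' ∈ ancestors par hpar w, Function.update ρ v t v')
        - Real.log (1 - ∑ v' ∈ barA par hpar w, Function.update ρ v t v')))
      =ᶠ[nhds (ρ v)]
      (fun t : ℝ => Real.log (∏ w,
        (1 - ∑ v' ∈ ancestors par hpar w, Function.update ρ v t v') /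
        (1 - ∑ v' ∈ barA par hpar w, Function.update ρ v t v'))) := by
    have hev1 : ∀ᶠ t in nhds (ρ v), ∀ w : Fin n,
        (1 - ∑ v' ∈ ancestors par hpar w, Function.update ρ v t v') ≠ 0 ∧
        (1 - ∑ v' ∈ barA par hpar w, Function.update ρ v t v') ≠ 0 := by
      rw [Filter.eventually_all]
      intro w
      have c1 := ((hasDerivAt_const (ρ v) (1:ℝ)).sub (hupd (ancestors par hpar w))).continuousAt
      have c2 := ((hasDerivAt_const (ρ v) (1:ℝ)).sub (hupd (barA par hpar w))).continuousAt
      have n1 : (1 - ∑ v' ∈ ancestors par hpar w, Function.update ρ v (ρ v) v') ≠ 0 := by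
        rw [show (∑ v' ∈ ancestors par hpar w, Function.update ρ v (ρ v) v') = A w from hAval _]
        exact ne_of_gt (hApos w)
      have n2 : (1 - ∑ v' ∈ barA par hpar w, Function.update ρ v (ρ v) v') ≠ 0 := by
        rw [show (∑ v' ∈ barA par hpar w, Function.update ρ v (ρ v) v') = S w from hAval _]
        exact ne_of_gt (hSpos w)
      exact (c1.eventually_ne n1).and (c2.eventually_ne n2)
    filter_upwards [hev1] with t ht
    rw [Real.log_prod]
    · exact Finset.sum_congr rfl fun w _ => (Real.log_div (ht w).1 (ht w).2).symm
    · intro w _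
      exact div_ne_zero (ht w).1 (ht w).2
  have hd2 : HasDerivAt (fun t : ℝ => Real.log (∏ w,
        (1 - ∑ v' ∈ ancestors par hpar w, Function.update ρ v t v') /
        (1 - ∑ v' ∈ barA par hpar w, Function.update ρ v t v'))) D (ρ v) :=
    hsum.congr_of_eventuallyEq hev.symm
  have hde : d = D := hd.unique hd2
  -- now the combinatorial identity
  have key : D = ∑ v' ∈ barD par hpar v,
      (1 - ((children par v').card : ℝ)) / (1 - S v') := by
    rw [hD, Finset.sum_sub_distrib]
    have e1 : (∑ w : Fin n, (if v ∈ barA par hpar w then (1:ℝ) else 0) / (1 - S w))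
        = ∑ w ∈ barD par hpar v, 1 / (1 - S w) := by
      rw [barD, Finset.sum_filter]
      exact Finset.sum_congr rfl fun w _ => by split_ifs <;> simp
    have e2 : (∑ w : Fin n, (if v ∈ ancestors par hpar w then (1:ℝ) else 0) / (1 - A w))
        = ∑ v' ∈ barD par hpar v, ((children par v').card : ℝ) * (1 / (1 - S v')) := by
      have step1 : (∑ w : Fin n, (if v ∈ ancestors par hpar w then (1:ℝ) else 0) / (1 - A w))
          = ∑ w ∈ strictD par hpar v, 1 / (1 - A w) := by
        rw [strictD, Finset.sum_filter]
        exact Finset.sum_congr rfl fun w _ => by split_ifs <;> simp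
      have step2 : strictD par hpar v = (barD par hpar v).biUnion (children par) := by
        ext w
        simp only [strictD, barD, children, Finset.mem_biUnion, Finset.mem_filter,
          Finset.mem_univ, true_and, mem_ancestors_iff par hpar v w]
        constructor
        · rintro ⟨hw0, hw⟩; exact ⟨par w, hw, hw0, rfl⟩
        · rintro ⟨v', hv', hw0, rfl⟩; exact ⟨hw0, hv'⟩
      have hdisj : ∀ v1 ∈ barD par hpar v, ∀ v2 ∈ barD par hpar v, v1 ≠ v2 →
          Disjoint (children par v1) (children par v2) := by
        intro v1 _ v2 _ hne
        rw [Finset.disjoint_left]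
        intro w hw1 hw2
        simp only [children, Finset.mem_filter] at hw1 hw2
        exact hne (hw1.2.2 ▸ hw2.2.2.symm ▸ rfl)
      rw [step1, step2, Finset.sum_biUnion hdisj]
      refine Finset.sum_congr rfl fun v' _ => ?_
      have : ∀ w ∈ children par v', 1 / (1 - A w) = 1 / (1 - S v') := by
        intro w hw
        simp only [children, Finset.mem_filter] at hw
        rw [hA]
        simp only
        rw [ancestors_ne_zero par hpar w hw.2.1, hw.2.2]
      rw [Finset.sum_congr rfl this, Finset.sum_const, nsmul_eq_mul]
    rw [e1, e2, ← Finset.sum_sub_distrib]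
    refine Finset.sum_congr rfl fun w _ => ?_
    have h0 : (1 - S w) ≠ 0 := ne_of_gt (hSpos w)
    field_simp
  rw [hde, key]
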